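/- For real numbers $\tau, x, c$ with $\tau \in (0,1)$, $c \ge 0$ and $x = \tau + c \in (0,1)$ or $x = \tau - c \in (0,1)$, the function $\Psi(x,\tau) := \tau\log(\tau/x) + (1-\tau)\log((1-\tau)/(1-x))$ satisfies $\Psi(x,\tau) \ge \frac{c^2}{2\tau(1-\tau) + 2c}$. -/

import Mathlib

open Real Set

/-- Lower bound for the Bernoulli Kullback–Leibler divergence:
`Ψ(x,τ) ≥ c²/(2τ(1-τ)+2c)` when `x = τ ± c ∈ (0,1)`. -/
theorem kl_lower_bound (τ x c : ℝ) (hτ : τ ∈ Set.Ioo (0 : ℝ) 1)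
    (hc : 0 ≤ c) (hx : x ∈ Set.Ioo (0 : ℝ) 1) (hxc : x = τ + c ∨ x = τ - c) :
    c ^ 2 / (2 * τ * (1 - τ) + 2 * c) ≤
      τ * Real.log (τ / x) + (1 - τ) * Real.log ((1 - τ) / (1 - x)) := by
  obtain ⟨hτ0, hτ1⟩ := hτ
  obtain ⟨hx0, hx1⟩ := hx
  set K : ℝ := τ * (1 - τ) + c with hKdef
  have hKpos : 0 < K := by nlinarith
  set G : ℝ → ℝ := fun s =>
      τ * Real.log (τ / s) + (1 - τ) * Real.log ((1 - τ) / (1 - s)) - (s - τ) ^ 2 / (2 * K)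
    with hGdef
  have hGτ : G τ = 0 := by
    simp [hGdef, div_self (ne_of_gt hτ0),
      div_self (show (1:ℝ) - τ ≠ 0 by linarith)]
  have hderiv : ∀ s ∈ Ioo (0:ℝ) 1,
      HasDerivAt G ((s - τ) * (K - s * (1 - s)) / (s * (1 - s) * K)) s := by
    intro s hs
    obtain ⟨hs0, hs1⟩ := hs
    have hs1' : 0 < 1 - s := by linarith
    have hτ1' : (0:ℝ) < 1 - τ := by linarith
    have hne1 : τ ≠ 0 := ne_of_gt hτ0
    have hne2 : s ≠ 0 := ne_of_gt hs0
    have hne3 : (1:ℝ) - τ ≠ 0 := ne_of_gt hτ1'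
    have hne4 : (1:ℝ) - s ≠ 0 := ne_of_gt hs1'
    have hKne : K ≠ 0 := ne_of_gt hKpos
    have h1 : HasDerivAt (fun s : ℝ => τ * Real.log (τ / s)) (-(τ / s)) s := by
      have hinner : HasDerivAt (fun s : ℝ => τ / s) (-(τ / s ^ 2)) s := by
        simpa [div_eq_mul_inv, mul_comm] using (hasDerivAt_inv (ne_of_gt hs0)).const_mul τ
      have hlog := (Real.hasDerivAt_log
          (ne_of_gt (div_pos hτ0 hs0))).comp s hinner
      have h := hlog.const_mul τ
      refine h.congr_deriv ?_
      field_simp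
    have h2 : HasDerivAt (fun s : ℝ => (1 - τ) * Real.log ((1 - τ) / (1 - s)))
        ((1 - τ) / (1 - s)) s := by
      have hinner0 : HasDerivAt (fun s : ℝ => 1 - s) (-1) s := by
        simpa using (hasDerivAt_id s).const_sub 1
      have hinner : HasDerivAt (fun s : ℝ => (1 - τ) / (1 - s))
          ((1 - τ) / (1 - s) ^ 2) s := by
        have := ((hasDerivAt_inv (ne_of_gt hs1')).comp s hinner0).const_mul (1 - τ)
        refine this.congr_deriv ?_
        field_simp
      have hlog := (Real.hasDerivAt_log
          (ne_of_gt (div_pos hτ1' hs1'))).comp s hinner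
      have h := hlog.const_mul (1 - τ)
      refine h.congr_deriv ?_
      field_simp
    have h3 : HasDerivAt (fun s : ℝ => (s - τ) ^ 2 / (2 * K)) ((s - τ) / K) s := by
      have := (((hasDerivAt_id s).sub_const τ).pow 2).div_const (2 * K)
      refine this.congr_deriv ?_
      field_simp
      simp only [id]; ring
    have h := (h1.add h2).sub h3
    refine h.congr_deriv ?_
    field_simp
    ring
  have hmain : 0 ≤ G x := by
    rcases hxc with h | h
    · -- x = τ + c, so τ ≤ x
      have hτx : τ ≤ x := by linarith
      have hsub : Icc τ x ⊆ Ioo (0:ℝ) 1 := fun s hs =>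
        ⟨lt_of_lt_of_le hτ0 hs.1, lt_of_le_of_lt hs.2 hx1⟩
      have hmono : MonotoneOn G (Icc τ x) := by
        apply monotoneOn_of_deriv_nonneg (convex_Icc τ x)
        · intro s hs
          exact (hderiv s (hsub hs)).continuousAt.continuousWithinAt
        · intro s hs
          rw [interior_Icc] at hs
          exact (hderiv s (hsub (Ioo_subset_Icc_self hs))).differentiableAt.differentiableWithinAt
        · intro s hs
          rw [interior_Icc] at hs
          have hmem := hsub (Ioo_subset_Icc_self hs)
          obtain ⟨hs0, hs1⟩ := hmem
          rw [(hderiv s ⟨hs0, hs1⟩).deriv]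
          apply div_nonneg
          · apply mul_nonneg (by linarith [hs.1])
            nlinarith [hs.2, hs.1]
          · exact (mul_pos (mul_pos hs0 (by linarith)) hKpos).le
      have := hmono (left_mem_Icc.2 hτx) (right_mem_Icc.2 hτx) hτx
      linarith [hGτ ▸ this]
    · -- x = τ - c, so x ≤ τ
      have hτx : x ≤ τ := by linarith
      have hsub : Icc x τ ⊆ Ioo (0:ℝ) 1 := fun s hs =>
        ⟨lt_of_lt_of_le hx0 hs.1, lt_of_le_of_lt hs.2 hτ1⟩
      have hanti : AntitoneOn G (Icc x τ) := by
        apply antitoneOn_of_deriv_nonpos (convex_Icc x τ)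
        · intro s hs
          exact (hderiv s (hsub hs)).continuousAt.continuousWithinAt
        · intro s hs
          rw [interior_Icc] at hs
          exact (hderiv s (hsub (Ioo_subset_Icc_self hs))).differentiableAt.differentiableWithinAt
        · intro s hs
          rw [interior_Icc] at hs
          have hmem := hsub (Ioo_subset_Icc_self hs)
          obtain ⟨hs0, hs1⟩ := hmem
          rw [(hderiv s ⟨hs0, hs1⟩).deriv]
          apply div_nonpos_of_nonpos_of_nonneg
          · apply mul_nonpos_of_nonpos_of_nonneg (by linarith [hs.2])
            nlinarith [hs.1, hs.2]
          · exact (mul_pos (mul_pos hs0 (by linarith)) hKpos).le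
      have := hanti (left_mem_Icc.2 hτx) (right_mem_Icc.2 hτx) hτx
      linarith [hGτ ▸ this]
  have hxτ : (x - τ) ^ 2 = c ^ 2 := by
    rcases hxc with h | h <;> rw [h] <;> ring
  have h2K : 2 * τ * (1 - τ) + 2 * c = 2 * K := by rw [hKdef]; ring
  have hGx : G x = τ * Real.log (τ / x) + (1 - τ) * Real.log ((1 - τ) / (1 - x))
      - (x - τ) ^ 2 / (2 * K) := rfl
  rw [h2K, ← hxτ]
  linarith [hGx ▸ hmain]
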